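/- Let R be a Prüfer domain and P a nonzero nonmaximal branched prime that is sharp (the radical of a finitely generated ideal). If Q is a proper P-primary ideal and B is an ideal with Q ⊊ B ⊆ P, then there exists a finitely generated ideal I of R with Q ⊊ I ⊊ B. -/

import Mathlib

/-- An ideal is divisorial if `I = (R : (R : I))`, phrased via fractional ideals. -/
def IsDivisorial (R : Type*) [CommRing R] [IsDomain R] (I : Ideal R) : Prop :=
  (1 / (1 / (I : FractionalIdeal (nonZeroDivisors R) (FractionRing R))) :
    FractionalIdeal (nonZeroDivisors R) (FractionRing R))
    = (I : FractionalIdeal (nonZeroDivisors R) (FractionRing R))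

/-- An ideal is invertible if it is a unit as a fractional ideal. -/
def IsInvertibleIdeal (R : Type*) [CommRing R] [IsDomain R] (I : Ideal R) : Prop :=
  IsUnit (I : FractionalIdeal (nonZeroDivisors R) (FractionRing R))

/-- A Prüfer domain: every nonzero finitely generated ideal is invertible. -/
def IsPrufer (R : Type*) [CommRing R] [IsDomain R] : Prop :=
  ∀ I : Ideal R, I ≠ ⊥ → I.FG → IsInvertibleIdeal R I

/-- A prime `P` is sharp if it contains a finitely generated ideal contained
only in the maximal ideals that contain `P`. -/
def IsSharp (R : Type*) [CommRing R] (P : Ideal R) : Prop :=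
  ∃ I : Ideal R, I.FG ∧ I ≤ P ∧ ∀ M : Ideal R, M.IsMaximal → I ≤ M → P ≤ M

open Pointwise in
lemma mem_radical_of_pow_smul_top_le {R : Type*} [CommRing R] {Q : Ideal R} {r : R}
    (h : ∃ n : ℕ, (r ^ n • ⊤ : Ideal R) ≤ Q) : r ∈ Q.radical := by
  obtain ⟨n, hn⟩ := h
  refine ⟨n, ?_⟩
  have : r ^ n • (1 : R) ∈ (r ^ n • ⊤ : Ideal R) :=
    Submodule.smul_mem_pointwise_smul _ _ _ Submodule.mem_top
  simpa using hn this

/-- Lemma: for a sharp branched nonzero nonmaximal prime `P` of a Prüfer domain, between a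
proper `P`-primary ideal `Q` and any larger ideal `B ⊆ P` there is a finitely
generated ideal, strictly on both sides. -/
theorem exists_fg_strictly_between (R : Type*) [CommRing R] [IsDomain R]
    (hR : IsPrufer R) (P : Ideal R) (hP : P.IsPrime) (h0 : P ≠ ⊥)
    (hnm : ¬ P.IsMaximal) (hsharp : IsSharp R P)
    (hrad : ∃ J : Ideal R, J.FG ∧ J.radical = P)
    (Q : Ideal R) (hQ : Q.IsPrimary) (hQrad : Q.radical = P) (hQP : Q ≠ P)
    (B : Ideal R) (hQB : Q < B) (hBP : B ≤ P) :
    ∃ I : Ideal R, I.FG ∧ Q < I ∧ I < B := by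
  classical
  obtain ⟨J, hJfg, hJrad⟩ := hrad
  have hJleQrad : J ≤ Q.radical := by
    rw [hQrad, ← hJrad]; exact Ideal.le_radical
  obtain ⟨n, hJn⟩ := Ideal.exists_pow_le_of_le_radical_of_fg hJleQrad hJfg
  obtain ⟨M₀, hM₀max, hPM₀⟩ := Ideal.exists_le_maximal P hP.ne_top
  have hPltM₀ : P < M₀ := lt_of_le_of_ne hPM₀ (fun h => hnm (h ▸ hM₀max))
  obtain ⟨x, hxM₀, hxP⟩ := SetLike.exists_of_lt hPltM₀
  obtain ⟨b, hbB, hbQ⟩ := SetLike.exists_of_lt hQB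
  have hxbQ : x * b ∉ Q := by
    intro h
    rcases hQ.2 h with h1 | h2
    · exact hbQ h1
    · exact hxP (hQrad ▸ mem_radical_of_pow_smul_top_le h2)
  set F := FractionRing R
  let φ : R →+* F := algebraMap R F
  have hφ : Function.Injective φ := IsFractionRing.injective R F
  set I : Ideal R := J ^ n ⊔ Ideal.span {x * b} with hI
  have hxbI : x * b ∈ I := le_sup_right (α := Ideal R)
    (Ideal.subset_span (Set.mem_singleton _))
  have hIfg : I.FG := Submodule.FG.sup (Submodule.FG.pow hJfg n) ⟨{x * b}, by simp⟩
  -- main containment : Q ≤ I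
  have hQI : Q ≤ I := by
    intro q hq
    by_cases hq0 : q = 0
    · subst hq0; exact zero_mem I
    set K : Ideal R := Ideal.span {q, x * b} with hK
    have hqK : q ∈ K := Ideal.subset_span (Set.mem_insert _ _)
    have hxbK : x * b ∈ K := Ideal.subset_span (by simp)
    have hKbot : K ≠ ⊥ := fun h => hq0 (Ideal.mem_bot.mp (h ▸ hqK))
    have hKfg : K.FG := ⟨{q, x * b}, by simp [hK]⟩
    obtain ⟨K', hKK'⟩ := (hR K hKbot hKfg).exists_right_inv
    have hKdec : (K : FractionalIdeal (nonZeroDivisors R) F)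
        = FractionalIdeal.spanSingleton (nonZeroDivisors R) (φ q)
          + FractionalIdeal.spanSingleton (nonZeroDivisors R) (φ (x * b)) := by
      rw [hK, show ({q, x * b} : Set R) = insert q {x * b} from rfl,
        Ideal.span_insert, FractionalIdeal.coeIdeal_sup,
        FractionalIdeal.coeIdeal_span_singleton,
        FractionalIdeal.coeIdeal_span_singleton]
    have hle1 : FractionalIdeal.spanSingleton (nonZeroDivisors R) (φ q) * K' ≤ 1 := by
      rw [← hKK']
      refine mul_le_mul_left ?_ K'
      rw [hKdec]; exact le_sup_left
    have hle2 : FractionalIdeal.spanSingleton (nonZeroDivisors R) (φ (x * b)) * K' ≤ 1 := by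
      rw [← hKK']
      refine mul_le_mul_left ?_ K'
      rw [hKdec]; exact le_sup_right
    obtain ⟨E₁, hE₁⟩ := FractionalIdeal.le_one_iff_exists_coeIdeal.mp hle1
    obtain ⟨E₂, hE₂⟩ := FractionalIdeal.le_one_iff_exists_coeIdeal.mp hle2
    have hsup : E₁ ⊔ E₂ = ⊤ := by
      refine FractionalIdeal.coeIdeal_injective' (P := F) (le_refl (nonZeroDivisors R)) ?_
      show ((E₁ ⊔ E₂ : Ideal R) : FractionalIdeal (nonZeroDivisors R) F)
        = ((⊤ : Ideal R) : FractionalIdeal (nonZeroDivisors R) F)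
      rw [FractionalIdeal.coeIdeal_sup, hE₁, hE₂, FractionalIdeal.coeIdeal_top,
        ← add_mul, ← hKdec, hKK']
    by_contra hqI
    have hC : I.colon (Ideal.span {q}) ≠ ⊤ := by
      intro h
      apply hqI
      have h1 : (1 : R) ∈ I.colon (Ideal.span {q}) := by rw [h]; trivial
      simpa using Ideal.mem_colon_span_singleton.mp h1
    obtain ⟨M, hMmax, hCM⟩ := Ideal.exists_le_maximal _ hC
    by_cases hJM : J ≤ M
    · -- P ≤ M, use invertibility
      have hPM : P ≤ M := by
        rw [← hJrad, ← hMmax.isPrime.radical]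
        exact Ideal.radical_mono hJM
      have hnotboth : ¬ (E₁ ≤ M ∧ E₂ ≤ M) := by
        rintro ⟨h1, h2⟩
        exact hMmax.ne_top (top_le_iff.mp (hsup ▸ sup_le h1 h2))
      rcases not_and_or.mp hnotboth with h1 | h2
      · -- E₁ ⊄ M : derive a contradiction with x*b ∉ Q
        obtain ⟨e₁, he₁E, he₁M⟩ := SetLike.not_le_iff_exists.mp h1
        have hmem : φ e₁ ∈ (E₁ : FractionalIdeal (nonZeroDivisors R) F) :=
          (FractionalIdeal.mem_coeIdeal _).mpr ⟨e₁, he₁E, rfl⟩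
        rw [hE₁] at hmem
        obtain ⟨c₁, hc₁K', hc₁⟩ := FractionalIdeal.mem_singleton_mul.mp hmem
        have hxc : φ (x * b) * c₁ ∈ (1 : FractionalIdeal (nonZeroDivisors R) F) := by
          rw [← hKK']
          exact FractionalIdeal.mul_mem_mul
            ((FractionalIdeal.mem_coeIdeal _).mpr ⟨x * b, hxbK, rfl⟩) hc₁K'
        obtain ⟨g, hg⟩ := (FractionalIdeal.mem_one_iff _).mp hxc
        have key : e₁ * (x * b) = q * g := by
          apply hφ
          simp only [map_mul]
          rw [hc₁, hg]
          simp only [map_mul]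
          ring
        have hmemQ : e₁ * (x * b) ∈ Q := key ▸ Ideal.mul_mem_right g Q hq
        rcases hQ.2 hmemQ with h | h
        · exact hxbQ h
        · exact he₁M (hPM (hQrad ▸ mem_radical_of_pow_smul_top_le h))
      · -- E₂ ⊄ M : produce e₂ ∉ M with e₂ * q ∈ I
        obtain ⟨e₂, he₂E, he₂M⟩ := SetLike.not_le_iff_exists.mp h2
        have hmem : φ e₂ ∈ (E₂ : FractionalIdeal (nonZeroDivisors R) F) :=
          (FractionalIdeal.mem_coeIdeal _).mpr ⟨e₂, he₂E, rfl⟩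
        rw [hE₂] at hmem
        obtain ⟨c₂, hc₂K', hc₂⟩ := FractionalIdeal.mem_singleton_mul.mp hmem
        have hqc : φ q * c₂ ∈ (1 : FractionalIdeal (nonZeroDivisors R) F) := by
          rw [← hKK']
          exact FractionalIdeal.mul_mem_mul
            ((FractionalIdeal.mem_coeIdeal _).mpr ⟨q, hqK, rfl⟩) hc₂K'
        obtain ⟨f, hf⟩ := (FractionalIdeal.mem_one_iff _).mp hqc
        have key : e₂ * q = x * b * f := by
          apply hφ
          simp only [map_mul]
          rw [hc₂, hf]
          simp only [map_mul]
          ring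
        have : e₂ ∈ I.colon (Ideal.span {q}) :=
          Ideal.mem_colon_span_singleton.mpr (key ▸ Ideal.mul_mem_right f I hxbI)
        exact he₂M (hCM this)
    · -- J ⊄ M
      obtain ⟨t, htJ, htM⟩ := SetLike.not_le_iff_exists.mp hJM
      have htI : t ^ n ∈ I := le_sup_left (α := Ideal R) (Ideal.pow_mem_pow htJ n)
      have : t ^ n ∈ I.colon (Ideal.span {q}) :=
        Ideal.mem_colon_span_singleton.mpr (Ideal.mul_mem_right q I htI)
      exact htM (hMmax.isPrime.mem_of_pow_mem n (hCM this))
  -- finish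
  have hIB : I ≤ B := sup_le (hJn.trans hQB.le)
    (Ideal.span_le.mpr (by simpa using B.mul_mem_left x hbB))
  have hbI : b ∉ I := by
    intro hb
    obtain ⟨j, hj, c, hc, hjc⟩ := Submodule.mem_sup.mp hb
    obtain ⟨r, hr⟩ := Ideal.mem_span_singleton'.mp hc
    have hbrQ : (1 - r * x) * b ∈ Q := by
      have hj' : j = b - c := eq_sub_of_add_eq hjc
      have h' : (1 - r * x) * b = j := by rw [hj', ← hr]; ring
      exact h' ▸ hJn hj
    rcases hQ.2 hbrQ with h | h
    · exact hbQ h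
    · have h1 : (1 : R) ∈ M₀ := by
        have := add_mem (hPM₀ (hQrad ▸ mem_radical_of_pow_smul_top_le h))
          (M₀.mul_mem_left r hxM₀)
        simpa using this
      exact hM₀max.ne_top ((Ideal.eq_top_iff_one _).mpr h1)
  refine ⟨I, hIfg, ?_, ?_⟩
  · exact lt_of_le_of_ne hQI (by rintro rfl; exact hxbQ hxbI)
  · exact lt_of_le_of_ne hIB (by rintro rfl; exact hbI hbB)
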